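/- Let X and Y be nonempty compact metric spaces with X path connected, and let Q : C(X,ℝ) → C(Y,ℝ) be a Markov operator. Then for every ε > 0 and every finite set F ⊆ C(X,ℝ) there exists N₀ ∈ ℕ such that for every integer N ≥ N₀ there exist continuous functions g_1, g_2, …, g_N : Y → X with ‖Q(f) − (1/N) ∑_{j=1}^N f ∘ g_j‖_∞ < ε for all f ∈ F. -/

import Mathlib

open Finset
open scoped Classical

noncomputable def clampR (x : ℝ) : ℝ := max 0 (min 1 x)

lemma clampR_nonneg (x : ℝ) : 0 ≤ clampR x := le_max_left _ _
lemma clampR_le_one (x : ℝ) : clampR x ≤ 1 := max_le zero_le_one (min_le_left _ _)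
lemma clampR_of_nonpos {x : ℝ} (h : x ≤ 0) : clampR x = 0 := by
  unfold clampR; rw [max_eq_left]; exact le_trans (min_le_right _ _) h
lemma clampR_of_one_le {x : ℝ} (h : 1 ≤ x) : clampR x = 1 := by
  unfold clampR; rw [min_eq_left h, max_eq_right zero_le_one]
lemma continuous_clampR : Continuous clampR := by
  unfold clampR; fun_prop

lemma cnt_le (N : ℕ) {b : ℝ} (hb : 0 ≤ b) :
    (((range N).filter (fun j : ℕ => ((j:ℝ)+1) ≤ b)).card : ℝ) ≤ b := by
  have hsub : (range N).filter (fun j : ℕ => ((j:ℝ)+1) ≤ b) ⊆ range ⌊b⌋₊ := by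
    intro j hj
    simp only [mem_filter, mem_range] at hj ⊢
    have h1 : ((j+1 : ℕ) : ℝ) ≤ b := by push_cast; linarith [hj.2]
    have := Nat.le_floor h1
    omega
  have h2 := card_le_card hsub
  rw [card_range] at h2
  exact le_trans (by exact_mod_cast h2) (Nat.floor_le hb)

lemma cnt_ge (N : ℕ) {b : ℝ} (hb : 0 ≤ b) (hbN : b ≤ N) :
    b - 1 ≤ (((range N).filter (fun j : ℕ => ((j:ℝ)+1) ≤ b)).card : ℝ) := by
  have hfl : ⌊b⌋₊ ≤ N := by
    have := Nat.floor_le_floor hbN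
    simpa using this
  have hsub : range ⌊b⌋₊ ⊆ (range N).filter (fun j : ℕ => ((j:ℝ)+1) ≤ b) := by
    intro j hj
    rw [mem_range] at hj
    refine mem_filter.2 ⟨mem_range.2 (lt_of_lt_of_le hj hfl), ?_⟩
    have h1 : (j+1 : ℕ) ≤ ⌊b⌋₊ := hj
    calc ((j:ℝ)+1) = ((j+1:ℕ):ℝ) := by push_cast; ring
      _ ≤ (⌊b⌋₊ : ℝ) := by exact_mod_cast h1
      _ ≤ b := Nat.floor_le hb
  have h2 := card_le_card hsub
  rw [card_range] at h2
  have h3 : b < ⌊b⌋₊ + 1 := Nat.lt_floor_add_one b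
  have h4 : (⌊b⌋₊:ℝ) ≤ (((range N).filter (fun j : ℕ => ((j:ℝ)+1) ≤ b)).card : ℝ) := by
    exact_mod_cast h2
  linarith

lemma downclosed_eq_range {S : Finset ℕ} (h : ∀ i ∈ S, ∀ j, j < i → j ∈ S) :
    S = range S.card := by
  ext i
  simp only [mem_range]
  constructor
  · intro hi
    have hsub : range (i+1) ⊆ S := by
      intro j hj; rw [mem_range] at hj
      rcases Nat.lt_succ_iff_lt_or_eq.1 hj with h' | rfl
      · exact h i hi j h'
      · exact hi
    have := card_le_card hsub; rwa [card_range, Nat.succ_le_iff] at this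
  · intro hi
    by_contra hns
    have hsub : S ⊆ range i := by
      intro j hj; rw [mem_range]
      by_contra hji; push_neg at hji
      rcases eq_or_lt_of_le hji with rfl | h'
      · exact hns hj
      · exact hns (h j hj i h')
    have := card_le_card hsub; rw [card_range] at this; omega

lemma abel_identity (r : ℕ) (a b : ℕ → ℝ) :
    ∑ q ∈ range (r+1), b q * a q
      = a 0 * (∑ q ∈ range (r+1), b q)
        + ∑ i ∈ range r, (a (i+1) - a i) * (∑ q ∈ Ico (i+1) (r+1), b q) := by
  induction r with
  | zero => simp [mul_comm]
  | succ r ih =>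
    have hsplit : ∀ i ∈ range r, (a (i+1) - a i) * (∑ q ∈ Ico (i+1) (r+1+1), b q)
        = (a (i+1) - a i) * (∑ q ∈ Ico (i+1) (r+1), b q) + (a (i+1) - a i) * b (r+1) := by
      intro i hi
      rw [mem_range] at hi
      rw [sum_Ico_succ_top (by omega : i+1 ≤ r+1), mul_add]
    have htel : ∑ i ∈ range r, (a (i+1) - a i) * b (r+1) = (a r - a 0) * b (r+1) := by
      rw [← sum_mul, sum_range_sub a]
    have hlast : ∑ q ∈ Ico (r+1) (r+1+1), b q = b (r+1) := by
      rw [sum_Ico_succ_top (le_refl (r+1)), Ico_self, sum_empty, zero_add]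
    rw [sum_range_succ (fun q => b q * a q) (r+1), ih, sum_range_succ b (r+1),
      sum_range_succ (fun i => (a (i+1) - a i) * (∑ q ∈ Ico (i+1) (r+1+1), b q)) r,
      sum_congr rfl hsplit, sum_add_distrib, htel, hlast]
    ring

lemma ramp_sum (N : ℕ) (hN : 0 < N) {K a : ℝ} (hK : 0 < K) (ha0 : 0 ≤ a) (ha1 : a ≤ 1) :
    |(∑ j ∈ range N, clampR (K * (((j:ℝ)+1)/N - a))) - N * (1-a)| ≤ N/K + 1 := by
  have hNpos : (0:ℝ) < N := by exact_mod_cast hN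
  have hKN : 0 ≤ (N:ℝ)/K := div_nonneg hNpos.le hK.le
  have hup : ∑ j ∈ range N, clampR (K * (((j:ℝ)+1)/N - a)) ≤ N*(1-a) + 1 := by
    have h1 : ∀ j ∈ range N, clampR (K * (((j:ℝ)+1)/N - a))
        ≤ 1 - (if ((j:ℝ)+1) ≤ N*a then (1:ℝ) else 0) := by
      intro j _
      by_cases h : ((j:ℝ)+1) ≤ N*a
      · rw [if_pos h]
        have ht : ((j:ℝ)+1)/N - a ≤ 0 := by
          rw [sub_nonpos, div_le_iff₀ hNpos]; linarith
        rw [clampR_of_nonpos (by nlinarith : K * (((j:ℝ)+1)/N - a) ≤ 0)]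
        norm_num
      · rw [if_neg h]; simpa using clampR_le_one _
    calc ∑ j ∈ range N, clampR (K * (((j:ℝ)+1)/N - a))
        ≤ ∑ j ∈ range N, (1 - if ((j:ℝ)+1) ≤ N*a then (1:ℝ) else 0) := sum_le_sum h1
      _ = N - (((range N).filter (fun j : ℕ => ((j:ℝ)+1) ≤ N*a)).card : ℝ) := by
          rw [sum_sub_distrib, sum_const, card_range, sum_boole]
          simp
      _ ≤ N*(1-a) + 1 := by
          have := cnt_ge N (mul_nonneg hNpos.le ha0) (by nlinarith : (N:ℝ)*a ≤ N)
          linarith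
  have hlo : N*(1-a) - N/K ≤ ∑ j ∈ range N, clampR (K * (((j:ℝ)+1)/N - a)) := by
    have h1 : ∀ j ∈ range N, (1 - if ((j:ℝ)+1) ≤ N*(a+1/K) then (1:ℝ) else 0)
        ≤ clampR (K * (((j:ℝ)+1)/N - a)) := by
      intro j _
      by_cases h : ((j:ℝ)+1) ≤ N*(a+1/K)
      · rw [if_pos h]; simpa using clampR_nonneg _
      · rw [if_neg h]
        push_neg at h
        have ht : 1 ≤ K * (((j:ℝ)+1)/N - a) := by
          have h2 : a + 1/K < ((j:ℝ)+1)/N := by rw [lt_div_iff₀ hNpos]; linarith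
          have h3 : 0 < ((j:ℝ)+1)/N - a - 1/K := by linarith
          have h4 : K * (((j:ℝ)+1)/N - a - 1/K) = K * (((j:ℝ)+1)/N - a) - 1 := by
            field_simp
          nlinarith [mul_pos hK h3]
        rw [clampR_of_one_le ht]; norm_num
    calc (N:ℝ)*(1-a) - N/K
        = N - N*(a+1/K) := by field_simp; ring
      _ ≤ N - (((range N).filter (fun j : ℕ => ((j:ℝ)+1) ≤ N*(a+1/K))).card : ℝ) := by
          have := cnt_le N (b := N*(a+1/K))
            (mul_nonneg hNpos.le (by positivity))
          linarith
      _ = ∑ j ∈ range N, (1 - if ((j:ℝ)+1) ≤ N*(a+1/K) then (1:ℝ) else 0) := by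
          rw [sum_sub_distrib, sum_const, card_range, sum_boole]
          simp
      _ ≤ ∑ j ∈ range N, clampR (K * (((j:ℝ)+1)/N - a)) := sum_le_sum h1
  rw [abs_sub_le_iff]
  constructor <;> linarith

section PathStuff
open Finset
variable {X : Type*} [TopologicalSpace X]

noncomputable def Pmap (z : ℕ → X) (γ : ∀ k : ℕ, Path (z k) (z (k+1))) : ℕ → ℝ → X
  | 0, _ => z 0
  | (k+1), s => if s ≤ (k:ℝ) then Pmap z γ k s else (γ k).extend (s - k)

lemma Pmap_nat (z : ℕ → X) (γ : ∀ k : ℕ, Path (z k) (z (k+1))) :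
    ∀ k (i : ℕ), i ≤ k → Pmap z γ k (i:ℝ) = z i := by
  intro k
  induction k with
  | zero => intro i hi; rw [Nat.le_zero.1 hi]; rfl
  | succ k ih =>
    intro i hi
    rcases Nat.lt_succ_iff_lt_or_eq.1 (Nat.lt_succ_of_le hi) with h | rfl
    · have h' : i ≤ k := by omega
      have : ((i:ℝ)) ≤ (k:ℝ) := by exact_mod_cast h'
      simp only [Pmap, if_pos this]
      exact ih i h'
    · have hnot : ¬ (((k+1:ℕ):ℝ) ≤ (k:ℝ)) := by push_cast; linarith
      simp only [Pmap, if_neg hnot]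
      have h1 : ((k+1:ℕ):ℝ) - (k:ℝ) = 1 := by push_cast; ring
      rw [h1, Path.extend_one]

lemma Pmap_continuous (z : ℕ → X) (γ : ∀ k : ℕ, Path (z k) (z (k+1))) :
    ∀ k, Continuous (Pmap z γ k) := by
  intro k
  induction k with
  | zero => exact continuous_const
  | succ k ih =>
    have hg : Continuous (fun s : ℝ => (γ k).extend (s - k)) :=
      (γ k).continuous_extend.comp (continuous_id.sub continuous_const)
    exact Continuous.if_le ih hg continuous_id continuous_const (by
      intro s hs
      subst hs
      rw [Pmap_nat z γ k k le_rfl, sub_self, Path.extend_zero])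

end PathStuff

open Finset in
set_option maxHeartbeats 1600000 in
lemma empirical_approx {X Y : Type*} [TopologicalSpace X] [Nonempty X] [TopologicalSpace Y]
    (Q : C(X, ℝ) →ₗ[ℝ] C(Y, ℝ))
    (hpos : ∀ f : C(X, ℝ), 0 ≤ f → 0 ≤ Q f) (hunit : Q 1 = 1)
    (F : Finset C(X, ℝ)) (δ : ℝ) (hδ : 0 < δ) (y₀ : Y) :
    ∃ (n : ℕ) (lam : Fin n → ℝ) (x : Fin n → X), (∀ k, 0 ≤ lam k) ∧ (∑ k, lam k = 1) ∧
      ∀ f ∈ F, |Q f y₀ - ∑ k, lam k * f (x k)| ≤ δ := by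
  classical
  set φ : X → (↥F → ℝ) := fun x f => (f : C(X,ℝ)) x with hφ
  set v : ↥F → ℝ := fun f => Q (f : C(X,ℝ)) y₀ with hv
  have hvmem : v ∈ closure (convexHull ℝ (Set.range φ)) := by
    by_contra hv_not
    obtain ⟨L, c, hLlt, hcv⟩ := geometric_hahn_banach_closed_point
      (convex_convexHull ℝ _).closure isClosed_closure hv_not
    set co : ↥F → ℝ := fun f => L (Pi.single f 1) with hco
    have hLexp : ∀ w : ↥F → ℝ, L w = ∑ f : ↥F, w f * co f := by
      intro w
      have hw : ∑ f : ↥F, Pi.single f (w f) = w := Finset.univ_sum_single w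
      calc L w = L (∑ f : ↥F, Pi.single f (w f)) := by rw [hw]
        _ = ∑ f : ↥F, L (Pi.single f (w f)) := by rw [map_sum]
        _ = ∑ f : ↥F, w f * co f := by
            refine Finset.sum_congr rfl (fun f _ => ?_)
            have h1 : (Pi.single f (w f) : ↥F → ℝ) = w f • (Pi.single f (1:ℝ) : ↥F → ℝ) := by
              rw [← Pi.single_smul, smul_eq_mul, mul_one]
            rw [h1, map_smul, smul_eq_mul, hco]
    set g : C(X,ℝ) := ∑ f ∈ F.attach, co f • (f : C(X,ℝ)) with hg
    have hgx : ∀ x : X, g x = L (φ x) := by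
      intro x
      rw [hg, hLexp (φ x)]
      rw [ContinuousMap.coe_sum, Finset.sum_apply]
      refine Finset.sum_congr rfl (fun f _ => ?_)
      simp [hφ, mul_comm]
    have hQg : Q g y₀ = L v := by
      rw [hg, map_sum, hLexp v]
      rw [ContinuousMap.coe_sum, Finset.sum_apply]
      refine Finset.sum_congr rfl (fun f _ => ?_)
      rw [map_smul]
      simp [hv, mul_comm]
    have hgle : ∀ x : X, g x < c := by
      intro x
      rw [hgx x]
      exact hLlt (φ x) (subset_closure (subset_convexHull ℝ _ (Set.mem_range_self x)))
    have hQle : Q g y₀ ≤ c := by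
      have h0 : (0:C(X,ℝ)) ≤ ContinuousMap.const X c - g := by
        rw [ContinuousMap.le_def]
        intro x
        simp only [ContinuousMap.zero_apply, ContinuousMap.sub_apply,
          ContinuousMap.const_apply]
        linarith [hgle x]
      have h1 := hpos _ h0
      rw [ContinuousMap.le_def] at h1
      have h4 := h1 y₀
      have h2 : ContinuousMap.const X c = c • (1 : C(X,ℝ)) := by
        ext x; simp
      have h3 : Q (ContinuousMap.const X c - g) y₀ = c - Q g y₀ := by
        rw [map_sub, h2, map_smul]
        rw [hunit]
        simp
      rw [ContinuousMap.zero_apply] at h4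
      rw [h3] at h4
      linarith
    rw [hQg] at hQle
    linarith
  rw [Metric.mem_closure_iff] at hvmem
  obtain ⟨p, hpmem, hpd⟩ := hvmem δ hδ
  rw [_root_.convexHull_eq] at hpmem
  obtain ⟨ι, t, w, zz, hw0, hw1, hzs, hcm⟩ := hpmem
  have hps : p = ∑ i ∈ t, w i • zz i := by
    rw [← hcm, Finset.centerMass_eq_of_sum_1 _ _ hw1]
  choose xx hxx using fun (a : ↥t) => hzs a.1 a.2
  refine ⟨t.card, fun k => w (t.equivFin.symm k).1, fun k => xx (t.equivFin.symm k),
    fun k => hw0 _ (t.equivFin.symm k).2, ?_, ?_⟩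
  · rw [Equiv.sum_comp t.equivFin.symm (fun a : ↥t => w a.1)]
    rw [← hw1, ← Finset.sum_attach t w]
    rw [Finset.univ_eq_attach]
  · intro f hf
    have h1 : ∑ k : Fin t.card, w (t.equivFin.symm k).1 * f (xx (t.equivFin.symm k))
        = ∑ a ∈ t.attach, w a.1 * f (xx a) := by
      rw [← Finset.univ_eq_attach]
      exact Equiv.sum_comp t.equivFin.symm (fun a : ↥t => w a.1 * f (xx a))
    have h2 : p ⟨f, hf⟩ = ∑ a ∈ t.attach, w a.1 * f (xx a) := by
      rw [hps]
      rw [← Finset.sum_attach t (fun i => w i • zz i)]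
      rw [Finset.sum_apply]
      refine Finset.sum_congr rfl (fun a _ => ?_)
      rw [Pi.smul_apply, smul_eq_mul]
      congr 1
      rw [← hxx a]
    have h3 : |v ⟨f, hf⟩ - p ⟨f, hf⟩| ≤ δ := by
      have h := dist_le_pi_dist v p ⟨f, hf⟩
      rw [Real.dist_eq] at h
      linarith [le_of_lt hpd]
    have h4 : v ⟨f, hf⟩ = Q f y₀ := by simp [hv]
    calc |Q f y₀ - ∑ k : Fin t.card, w (t.equivFin.symm k).1 * f (xx (t.equivFin.symm k))|
        = |v ⟨f, hf⟩ - p ⟨f, hf⟩| := by rw [h4, h1, h2]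
      _ ≤ δ := h3

set_option maxHeartbeats 1600000 in
open Finset in
lemma main_construction {X Y : Type*} [MetricSpace X] [CompactSpace X] [Nonempty X]
    [PathConnectedSpace X] [TopologicalSpace Y]
    (F : Finset C(X, ℝ)) (m : ℕ) (hm : 0 < m) (z : ℕ → X) (u : ℕ → Y → ℝ)
    (hu_cont : ∀ q, Continuous (u q)) (hu_nonneg : ∀ q y, 0 ≤ u q y)
    (hu_sum : ∀ y, ∑ q ∈ range m, u q y = 1) (ε' : ℝ) (hε' : 0 < ε') :
    ∃ N₀ : ℕ, 0 < N₀ ∧ ∀ N : ℕ, N₀ ≤ N → ∃ g : Fin N → C(Y, X), ∀ f ∈ F, ∀ y : Y,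
      |(∑ q ∈ range m, u q y * f (z q)) - (N : ℝ)⁻¹ * ∑ j : Fin N, f ((g j) y)| < ε' := by
  classical
  obtain ⟨r, rfl⟩ : ∃ r, m = r + 1 := ⟨m - 1, by omega⟩
  set B : ℝ := 1 + ∑ f ∈ F, ‖f‖ with hB
  have hB1 : (1:ℝ) ≤ B := by
    have : 0 ≤ ∑ f ∈ F, ‖f‖ := sum_nonneg fun f _ => norm_nonneg f
    rw [hB]; linarith
  have hBpos : (0:ℝ) < B := lt_of_lt_of_le one_pos hB1
  have hfB : ∀ f ∈ F, ∀ x : X, |f x| ≤ B := by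
    intro f hf x
    have h1 : ‖f‖ ≤ B := by
      have := single_le_sum (f := fun f : C(X,ℝ) => ‖f‖) (fun g _ => norm_nonneg g) hf
      rw [hB]; linarith
    calc |f x| = ‖f x‖ := rfl
      _ ≤ ‖f‖ := f.norm_coe_le_norm x
      _ ≤ B := h1
  set E : ℝ := 2*B*(r+1)*r + 2*B*r + 1 with hE
  have hEpos : (0:ℝ) < E := by
    have h1 : (0:ℝ) ≤ 2*B*(r+1)*r := by positivity
    have h2 : (0:ℝ) ≤ 2*B*r := by positivity
    rw [hE]; linarith
  set K : ℝ := 2*E/ε' + 1 with hK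
  have hKpos : (0:ℝ) < K := by rw [hK]; positivity
  have hKE : E / K < ε'/2 := by
    rw [div_lt_iff₀ hKpos, hK]
    have : ε'/2 * (2*E/ε') = E := by field_simp
    nlinarith
  refine ⟨⌈2*E/ε'⌉₊ + 1, Nat.succ_pos _, ?_⟩
  intro N hN
  have hNpos : 0 < N := lt_of_lt_of_le (Nat.succ_pos _) hN
  have hNR : (0:ℝ) < N := by exact_mod_cast hNpos
  have hNE : E / N < ε'/2 := by
    rw [div_lt_iff₀ hNR]
    have h1 : 2*E/ε' < N := by
      have := Nat.lt_succ_floor (2*E/ε')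
      have h2 : (⌈2*E/ε'⌉₊ : ℝ) < ((⌈2*E/ε'⌉₊ + 1 : ℕ) : ℝ) := by push_cast; linarith
      have h3 : 2*E/ε' ≤ (⌈2*E/ε'⌉₊ : ℝ) := Nat.le_ceil _
      have h4 : ((⌈2*E/ε'⌉₊ + 1 : ℕ) : ℝ) ≤ (N:ℝ) := by exact_mod_cast hN
      linarith
    rw [div_lt_iff₀ hε'] at h1
    nlinarith
  clear_value K
  -- cumulative weights
  set W : ℕ → Y → ℝ := fun i y => ∑ q ∈ range (i+1), u q y with hWdef
  have hWcont : ∀ i, Continuous (W i) := by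
    intro i; rw [hWdef]; exact continuous_finset_sum _ (fun q _ => hu_cont q)
  have hW0 : ∀ i y, 0 ≤ W i y := fun i y => sum_nonneg (fun q _ => hu_nonneg q y)
  have hWmono : ∀ i i' : ℕ, i ≤ i' → ∀ y, W i y ≤ W i' y := by
    intro i i' h y
    exact sum_le_sum_of_subset_of_nonneg (range_subset_range.2 (by omega))
      (fun q _ _ => hu_nonneg q y)
  have hWle1 : ∀ i y, i < r + 1 → W i y ≤ 1 := by
    intro i y hi
    rw [← hu_sum y]
    exact sum_le_sum_of_subset_of_nonneg (range_subset_range.2 (by omega))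
      (fun q _ _ => hu_nonneg q y)
  -- paths
  set γ : ∀ k : ℕ, Path (z k) (z (k+1)) :=
    fun k => (PathConnectedSpace.joined (z k) (z (k+1))).somePath with hγ
  set σ : ℕ → Y → ℝ :=
    fun j y => ∑ i ∈ range r, clampR (K * (((j:ℝ)+1)/(N:ℝ) - W i y)) with hσ
  have hσcont : ∀ j, Continuous (σ j) := by
    intro j; rw [hσ]
    apply continuous_finset_sum _ (fun i _ => ?_)
    exact continuous_clampR.comp (continuous_const.mul (continuous_const.sub (hWcont i)))
  refine ⟨fun j => ⟨fun y => Pmap z γ r (σ (j:ℕ) y),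
    (Pmap_continuous z γ r).comp (hσcont _)⟩, ?_⟩
  intro f hf y
  simp only [ContinuousMap.coe_mk]
  rw [Fin.sum_univ_eq_sum_range (fun j => f (Pmap z γ r (σ j y))) N]
  -- abbreviations for this y
  set ρ : ℕ → ℕ → ℝ := fun i j => clampR (K * (((j:ℝ)+1)/(N:ℝ) - W i y)) with hρdef
  have hσρ : ∀ j : ℕ, σ j y = ∑ i ∈ range r, ρ i j := fun j => rfl
  set D : ℕ → ℝ := fun i => f (z (i+1)) - f (z i) with hDdef
  have hDbd : ∀ i, |D i| ≤ 2*B := by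
    intro i
    rw [hDdef]
    calc |f (z (i+1)) - f (z i)| ≤ |f (z (i+1))| + |f (z i)| := abs_sub _ _
      _ ≤ B + B := add_le_add (hfB f hf _) (hfB f hf _)
      _ = 2*B := by ring
  set L : ℕ → ℝ := fun j => f (z 0) + ∑ i ∈ range r, D i * ρ i j with hLdef
  have habs_sub : ∀ a b : ℝ, |a - b| ≤ |a| + |b| := by
    intro a b
    rw [sub_eq_add_neg]
    exact (abs_add_le _ _).trans_eq (by rw [abs_neg])
  have hρ0 : ∀ i j, 0 ≤ ρ i j := by
    intro i j; simp only [hρdef]; exact clampR_nonneg _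
  have hρ1 : ∀ i j, ρ i j ≤ 1 := by
    intro i j; simp only [hρdef]; exact clampR_le_one _
  have hσρ : ∀ j : ℕ, σ j y = ∑ i ∈ range r, ρ i j := by
    intro j; simp only [hσ, hρdef]
  -- exact formula for "good" j
  have hgood : ∀ j : ℕ,
      (∀ i ∈ range r, ((j:ℝ)+1)/(N:ℝ) ≤ W i y ∨ W i y + 1/K ≤ ((j:ℝ)+1)/(N:ℝ)) →
      f (Pmap z γ r (σ j y)) = L j := by
    intro j hj
    set S : Finset ℕ := (range r).filter (fun i : ℕ => W i y + 1/K ≤ ((j:ℝ)+1)/(N:ℝ)) with hS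
    have hSsub : S ⊆ range r := filter_subset _ _
    have hdc : ∀ i ∈ S, ∀ i', i' < i → i' ∈ S := by
      intro i hi i' hi'
      rw [hS, mem_filter, mem_range] at hi ⊢
      refine ⟨by omega, ?_⟩
      have := hWmono i' i (by omega) y
      linarith [hi.2]
    have hSrange := downclosed_eq_range hdc
    obtain ⟨c, hcS⟩ : ∃ c, S = range c := ⟨S.card, hSrange⟩
    have hcr : c ≤ r := range_subset_range.1 (hcS ▸ hSsub)
    have hρS : ∀ i ∈ range r, ρ i j = if i ∈ S then (1:ℝ) else 0 := by
      intro i hi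
      by_cases hiS : i ∈ S
      · rw [if_pos hiS]
        have h1 : W i y + 1/K ≤ ((j:ℝ)+1)/(N:ℝ) := (mem_filter.1 hiS).2
        simp only [hρdef]
        apply clampR_of_one_le
        have h2 : 1/K ≤ ((j:ℝ)+1)/(N:ℝ) - W i y := by linarith
        calc (1:ℝ) = K * (1/K) := by field_simp
          _ ≤ K * (((j:ℝ)+1)/(N:ℝ) - W i y) := mul_le_mul_of_nonneg_left h2 hKpos.le
      · rw [if_neg hiS]
        have h1 : ((j:ℝ)+1)/(N:ℝ) ≤ W i y := by
          rcases hj i hi with h | h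
          · exact h
          · exact absurd (mem_filter.2 ⟨hi, h⟩) hiS
        simp only [hρdef]
        apply clampR_of_nonpos
        have h2 : ((j:ℝ)+1)/(N:ℝ) - W i y ≤ 0 := by linarith
        have h3 := mul_nonneg hKpos.le (neg_nonneg.2 h2)
        nlinarith [h3]
    have hσc : σ j y = (c : ℝ) := by
      rw [hσρ j, sum_congr rfl hρS, sum_boole]
      congr 1
      rw [filter_mem_eq_inter, inter_eq_right.2 hSsub, hcS, card_range]
    rw [hσc, Pmap_nat z γ r c hcr]
    simp only [hLdef]
    rw [sum_congr rfl (fun i hi => by rw [hρS i hi])]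
    have h3 : (∑ i ∈ range r, D i * if i ∈ S then (1:ℝ) else 0) = ∑ i ∈ S, D i := by
      simp only [mul_ite, mul_one, mul_zero]
      rw [← sum_filter, filter_mem_eq_inter, inter_eq_right.2 hSsub]
    have h4 : ∑ i ∈ S, D i = f (z c) - f (z 0) := by
      rw [hcS]
      simp only [hDdef]
      exact sum_range_sub (fun i => f (z i)) c
    rw [h3, h4]
    ring
  -- bounds
  have hLbd : ∀ j, |L j| ≤ B + 2*B*r := by
    intro j
    simp only [hLdef]
    calc |f (z 0) + ∑ i ∈ range r, D i * ρ i j|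
        ≤ |f (z 0)| + |∑ i ∈ range r, D i * ρ i j| := abs_add_le _ _
      _ ≤ B + ∑ i ∈ range r, |D i * ρ i j| :=
          add_le_add (hfB f hf _) (abs_sum_le_sum_abs _ _)
      _ ≤ B + ∑ i ∈ range r, 2*B := by
          refine add_le_add_right (sum_le_sum fun i _ => ?_) B
          rw [abs_mul]
          have h1 := hDbd i
          have h2 : |ρ i j| ≤ 1 := by
            rw [abs_of_nonneg (hρ0 i j)]; exact hρ1 i j
          nlinarith [abs_nonneg (D i), abs_nonneg (ρ i j)]
      _ = B + 2*B*r := by rw [sum_const, card_range, nsmul_eq_mul]; ring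
  -- bad set
  set bad : Finset ℕ := (range N).filter (fun j : ℕ => ∃ i ∈ range r,
      W i y < ((j:ℝ)+1)/(N:ℝ) ∧ ((j:ℝ)+1)/(N:ℝ) < W i y + 1/K) with hbad
  have hdiff : ∀ j ∈ range N, |f (Pmap z γ r (σ j y)) - L j|
      ≤ (2*B*(r+1)) * (if j ∈ bad then 1 else 0) := by
    intro j hjN
    by_cases hjb : j ∈ bad
    · rw [if_pos hjb, mul_one]
      calc |f (Pmap z γ r (σ j y)) - L j|
          ≤ |f (Pmap z γ r (σ j y))| + |L j| := habs_sub _ _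
        _ ≤ B + (B + 2*B*r) := add_le_add (hfB f hf _) (hLbd j)
        _ = 2*B*(r+1) := by ring
    · rw [if_neg hjb, mul_zero]
      have hgoodj : ∀ i ∈ range r,
          ((j:ℝ)+1)/(N:ℝ) ≤ W i y ∨ W i y + 1/K ≤ ((j:ℝ)+1)/(N:ℝ) := by
        intro i hi
        by_contra hcon
        push_neg at hcon
        exact hjb (mem_filter.2 ⟨hjN, ⟨i, hi, hcon.1, hcon.2⟩⟩)
      rw [hgood j hgoodj, sub_self, abs_zero]
  have hbadcard : (bad.card : ℝ) ≤ (r:ℝ) * ((N:ℝ)/K + 1) := by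
    have hsub : bad ⊆ (range r).biUnion (fun i => (range N).filter
        (fun j : ℕ => W i y < ((j:ℝ)+1)/(N:ℝ) ∧ ((j:ℝ)+1)/(N:ℝ) < W i y + 1/K)) := by
      intro j hj
      rw [hbad, mem_filter] at hj
      obtain ⟨hjN, i, hi, h1, h2⟩ := hj
      exact mem_biUnion.2 ⟨i, hi, mem_filter.2 ⟨hjN, h1, h2⟩⟩
    have h1 := le_trans (card_le_card hsub) card_biUnion_le
    have h2 : ∀ i ∈ range r, ((((range N).filter
        (fun j : ℕ => W i y < ((j:ℝ)+1)/(N:ℝ) ∧ ((j:ℝ)+1)/(N:ℝ) < W i y + 1/K)).card : ℕ) : ℝ)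
        ≤ (N:ℝ)/K + 1 := by
      intro i hi
      rw [mem_range] at hi
      set S₁ := (range N).filter (fun j : ℕ => ((j:ℝ)+1) ≤ (N:ℝ)*(W i y + 1/K)) with hS₁
      set S₂ := (range N).filter (fun j : ℕ => ((j:ℝ)+1) ≤ (N:ℝ)*(W i y)) with hS₂
      have hsub12 : S₂ ⊆ S₁ := by
        intro j hj; rw [hS₂, mem_filter] at hj; rw [hS₁, mem_filter]
        refine ⟨hj.1, le_trans hj.2 ?_⟩
        have h3 : 0 < 1/K := by positivity
        nlinarith
      have hsubS : (range N).filter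
          (fun j : ℕ => W i y < ((j:ℝ)+1)/(N:ℝ) ∧ ((j:ℝ)+1)/(N:ℝ) < W i y + 1/K) ⊆ S₁ \ S₂ := by
        intro j hj
        rw [mem_filter] at hj
        obtain ⟨hjN, h1', h2'⟩ := hj
        rw [mem_sdiff, hS₁, hS₂, mem_filter, mem_filter]
        constructor
        · refine ⟨hjN, ?_⟩
          rw [div_lt_iff₀ hNR] at h2'
          linarith
        · rintro ⟨-, h3⟩
          rw [lt_div_iff₀ hNR] at h1'
          linarith
      have hc1 : ((S₁.card : ℕ) : ℝ) ≤ (N:ℝ)*(W i y + 1/K) := by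
        rw [hS₁]
        exact cnt_le N (mul_nonneg hNR.le (add_nonneg (hW0 i y) (by positivity)))
      have hc2 : (N:ℝ)*(W i y) - 1 ≤ ((S₂.card : ℕ) : ℝ) := by
        rw [hS₂]
        refine cnt_ge N (mul_nonneg hNR.le (hW0 i y)) ?_
        have h4 : W i y ≤ 1 := hWle1 i y (by omega)
        nlinarith
      have hcard := card_le_card hsubS
      rw [card_sdiff_of_subset hsub12] at hcard
      have h5 : ((S₁.card - S₂.card : ℕ) : ℝ) = (S₁.card:ℝ) - (S₂.card:ℝ) :=
        Nat.cast_sub (card_le_card hsub12)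
      calc ((((range N).filter (fun j : ℕ => W i y < ((j:ℝ)+1)/(N:ℝ)
              ∧ ((j:ℝ)+1)/(N:ℝ) < W i y + 1/K)).card : ℕ) : ℝ)
          ≤ ((S₁.card - S₂.card : ℕ) : ℝ) := by exact_mod_cast hcard
        _ = (S₁.card:ℝ) - (S₂.card:ℝ) := h5
        _ ≤ (N:ℝ)*(W i y + 1/K) - ((N:ℝ)*(W i y) - 1) := by linarith
        _ = (N:ℝ)/K + 1 := by field_simp; ring
    calc (bad.card : ℝ)
        ≤ ((∑ i ∈ range r, ((range N).filter (fun j : ℕ => W i y < ((j:ℝ)+1)/(N:ℝ)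
            ∧ ((j:ℝ)+1)/(N:ℝ) < W i y + 1/K)).card : ℕ) : ℝ) := by exact_mod_cast h1
      _ = ∑ i ∈ range r, ((((range N).filter (fun j : ℕ => W i y < ((j:ℝ)+1)/(N:ℝ)
            ∧ ((j:ℝ)+1)/(N:ℝ) < W i y + 1/K)).card : ℕ) : ℝ) := by push_cast; rfl
      _ ≤ ∑ i ∈ range r, ((N:ℝ)/K + 1) := sum_le_sum h2
      _ = (r:ℝ) * ((N:ℝ)/K + 1) := by rw [sum_const, card_range, nsmul_eq_mul]
  -- ramp means
  have hramp : ∀ i ∈ range r,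
      |(∑ j ∈ range N, ρ i j) - (N:ℝ)*(1 - W i y)| ≤ (N:ℝ)/K + 1 := by
    intro i hi
    rw [mem_range] at hi
    have := ramp_sum N hNpos hKpos (hW0 i y) (hWle1 i y (by omega))
    simp only [hρdef]
    exact this
  -- Abel identity for the target
  have htail : ∀ i ∈ range r, ∑ q ∈ Ico (i+1) (r+1), u q y = 1 - W i y := by
    intro i hi
    rw [mem_range] at hi
    have hsplit : (∑ q ∈ range (i+1), u q y) + ∑ q ∈ Ico (i+1) (r+1), u q y
        = ∑ q ∈ range (r+1), u q y := by
      simp only [range_eq_Ico]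
      exact sum_Ico_consecutive _ (Nat.zero_le _) (by omega)
    rw [hu_sum y] at hsplit
    have hWi : W i y = ∑ q ∈ range (i+1), u q y := by simp only [hWdef]
    linarith
  have habel : (∑ q ∈ range (r+1), u q y * f (z q))
      = f (z 0) + ∑ i ∈ range r, D i * (1 - W i y) := by
    have h1 := abel_identity r (fun q => f (z q)) (fun q => u q y)
    rw [hu_sum y, mul_one] at h1
    rw [h1]
    congr 1
    refine sum_congr rfl (fun i hi => ?_)
    rw [htail i hi]
  -- sum of L
  set R : ℕ → ℝ := fun i => ∑ j ∈ range N, ρ i j with hRdef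
  have hsumL : ∑ j ∈ range N, L j = (N:ℝ) * f (z 0) + ∑ i ∈ range r, D i * R i := by
    simp only [hLdef]
    rw [sum_add_distrib, sum_const, card_range, nsmul_eq_mul]
    congr 1
    rw [sum_comm]
    refine sum_congr rfl (fun i _ => ?_)
    rw [← mul_sum]
  -- main estimate 1: replacing f∘g by L
  have hmain1 : |(∑ j ∈ range N, f (Pmap z γ r (σ j y))) - ∑ j ∈ range N, L j|
      ≤ 2*B*(r+1) * ((r:ℝ) * ((N:ℝ)/K + 1)) := by
    rw [← sum_sub_distrib]
    calc |∑ j ∈ range N, (f (Pmap z γ r (σ j y)) - L j)|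
        ≤ ∑ j ∈ range N, |f (Pmap z γ r (σ j y)) - L j| := abs_sum_le_sum_abs _ _
      _ ≤ ∑ j ∈ range N, (2*B*(r+1)) * (if j ∈ bad then 1 else 0) := sum_le_sum hdiff
      _ = 2*B*(r+1) * (bad.card : ℝ) := by
          rw [← mul_sum, sum_boole]
          congr 2
          rw [filter_mem_eq_inter, inter_eq_right.2 (filter_subset _ _)]
      _ ≤ 2*B*(r+1) * ((r:ℝ) * ((N:ℝ)/K + 1)) := by
          refine mul_le_mul_of_nonneg_left hbadcard ?_
          positivity
  -- main estimate 2
  have hmain2 : |(∑ q ∈ range (r+1), u q y * f (z q)) - (N:ℝ)⁻¹ * ∑ j ∈ range N, L j|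
      ≤ 2*B*(r:ℝ)*(1/K + 1/(N:ℝ)) := by
    rw [habel, hsumL]
    have heq : f (z 0) + (∑ i ∈ range r, D i * (1 - W i y))
        - (N:ℝ)⁻¹ * ((N:ℝ) * f (z 0) + ∑ i ∈ range r, D i * R i)
        = ∑ i ∈ range r, D i * ((1 - W i y) - (N:ℝ)⁻¹ * R i) := by
      have hC : ∑ i ∈ range r, D i * ((1 - W i y) - (N:ℝ)⁻¹ * R i)
          = (∑ i ∈ range r, D i * (1 - W i y)) - ∑ i ∈ range r, (N:ℝ)⁻¹ * (D i * R i) := by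
        rw [← sum_sub_distrib]
        exact sum_congr rfl (fun i _ => by ring)
      rw [mul_add, ← mul_assoc, inv_mul_cancel₀ hNR.ne', one_mul, mul_sum, hC]
      ring
    rw [heq]
    calc |∑ i ∈ range r, D i * ((1 - W i y) - (N:ℝ)⁻¹ * R i)|
        ≤ ∑ i ∈ range r, |D i * ((1 - W i y) - (N:ℝ)⁻¹ * R i)| := abs_sum_le_sum_abs _ _
      _ ≤ ∑ i ∈ range r, 2*B*(1/K + 1/(N:ℝ)) := by
          refine sum_le_sum (fun i hi => ?_)
          rw [abs_mul]
          have h6 : |(1 - W i y) - (N:ℝ)⁻¹ * R i| ≤ 1/K + 1/(N:ℝ) := by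
            have h7 : (1 - W i y) - (N:ℝ)⁻¹ * R i
                = -(((R i) - (N:ℝ)*(1 - W i y)) / (N:ℝ)) := by
              field_simp
              ring
            rw [h7, abs_neg, abs_div, abs_of_pos hNR]
            rw [div_le_iff₀ hNR]
            have h8 := hramp i hi
            have h9 : (1/K + 1/(N:ℝ)) * (N:ℝ) = (N:ℝ)/K + 1 := by
              field_simp
            rw [h9]
            simp only [hRdef] at h8 ⊢
            exact h8
          have h10 := hDbd i
          nlinarith [abs_nonneg (D i), abs_nonneg ((1 - W i y) - (N:ℝ)⁻¹ * R i)]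
      _ = 2*B*(r:ℝ)*(1/K + 1/(N:ℝ)) := by rw [sum_const, card_range, nsmul_eq_mul]; ring
  -- combine
  have htri : |(∑ q ∈ range (r+1), u q y * f (z q))
      - (N:ℝ)⁻¹ * ∑ j ∈ range N, f (Pmap z γ r (σ j y))|
      ≤ 2*B*(r:ℝ)*(1/K + 1/(N:ℝ)) + 2*B*((r:ℝ)+1)*(r:ℝ)*(1/K + 1/(N:ℝ)) := by
    have h11 : |(N:ℝ)⁻¹ * ∑ j ∈ range N, L j
        - (N:ℝ)⁻¹ * ∑ j ∈ range N, f (Pmap z γ r (σ j y))|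
        ≤ 2*B*((r:ℝ)+1)*(r:ℝ)*(1/K + 1/(N:ℝ)) := by
      rw [← mul_sub, abs_mul, abs_of_pos (inv_pos.2 hNR), abs_sub_comm]
      have h12 : (N:ℝ)⁻¹ * (2*B*((r:ℝ)+1) * ((r:ℝ) * ((N:ℝ)/K + 1)))
          = 2*B*((r:ℝ)+1)*(r:ℝ)*(1/K + 1/(N:ℝ)) := by
        field_simp
      calc (N:ℝ)⁻¹ * |(∑ j ∈ range N, f (Pmap z γ r (σ j y))) - ∑ j ∈ range N, L j|
          ≤ (N:ℝ)⁻¹ * (2*B*((r:ℝ)+1) * ((r:ℝ) * ((N:ℝ)/K + 1))) := by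
            refine mul_le_mul_of_nonneg_left ?_ (inv_pos.2 hNR).le
            exact_mod_cast hmain1
        _ = 2*B*((r:ℝ)+1)*(r:ℝ)*(1/K + 1/(N:ℝ)) := h12
    calc |(∑ q ∈ range (r+1), u q y * f (z q))
        - (N:ℝ)⁻¹ * ∑ j ∈ range N, f (Pmap z γ r (σ j y))|
        ≤ |(∑ q ∈ range (r+1), u q y * f (z q)) - (N:ℝ)⁻¹ * ∑ j ∈ range N, L j|
          + |(N:ℝ)⁻¹ * ∑ j ∈ range N, L j
            - (N:ℝ)⁻¹ * ∑ j ∈ range N, f (Pmap z γ r (σ j y))| := abs_sub_le _ _ _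
      _ ≤ _ := add_le_add hmain2 h11
  have hc : (0:ℝ) < 1/K + 1/(N:ℝ) := by positivity
  have hEeq : 2*B*(r:ℝ)*(1/K + 1/(N:ℝ)) + 2*B*((r:ℝ)+1)*(r:ℝ)*(1/K + 1/(N:ℝ))
      = E/K + E/(N:ℝ) - (1/K + 1/(N:ℝ)) := by
    rw [hE]; ring
  rw [hEeq] at htri
  calc |(∑ q ∈ range (r+1), u q y * f (z q))
      - (N:ℝ)⁻¹ * ∑ j ∈ range N, f (Pmap z γ r (σ j y))|
      ≤ E/K + E/(N:ℝ) - (1/K + 1/(N:ℝ)) := htri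
    _ < ε' := by linarith

set_option maxHeartbeats 3200000 in
/-- if X, Y are nonempty compact metric spaces with X path connected and
Q : C(X,ℝ) → C(Y,ℝ) is a Markov operator (linear, positive, unital), then for every ε > 0
and every finite set F ⊆ C(X,ℝ) there is N₀ such that for every N ≥ N₀ there are continuous
maps g_1, …, g_N : Y → X with ‖Q f − (1/N) ∑_j f ∘ g_j‖ < ε for all f ∈ F. -/
theorem stmt_6 {X Y : Type*} [MetricSpace X] [CompactSpace X] [Nonempty X]
    [PathConnectedSpace X]
    [MetricSpace Y] [CompactSpace Y] [Nonempty Y]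
    (Q : C(X, ℝ) →ₗ[ℝ] C(Y, ℝ))
    (hpos : ∀ f : C(X, ℝ), 0 ≤ f → 0 ≤ Q f) (hunit : Q 1 = 1)
    (ε : ℝ) (hε : 0 < ε) (F : Finset C(X, ℝ)) :
    ∃ N₀ : ℕ, ∀ N : ℕ, N₀ ≤ N →
      ∃ g : Fin N → C(Y, X), ∀ f ∈ F,
        ‖Q f - (N : ℝ)⁻¹ • ∑ j : Fin N, f.comp (g j)‖ < ε := by
  classical
  -- uniform continuity modulus
  have h1 : ∀ f : C(X,ℝ), f ∈ F → ∃ δ > 0, ∀ {y y' : Y}, dist y y' < δ →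
      dist ((Q f) y) ((Q f) y') < ε/6 :=
    fun f _ => (Q f).uniform_continuity (ε/6) (by linarith)
  choose δf hδfpos hδf using h1
  set δ : ℝ := if h : F.Nonempty then
      (F.attach.inf' (by simpa using h) (fun f => δf f.1 f.2)) else 1 with hδdef
  have hδpos : 0 < δ := by
    rw [hδdef]
    split_ifs with h
    · rw [Finset.lt_inf'_iff]
      intro f _
      exact hδfpos f.1 f.2
    · norm_num
  have hδle : ∀ f (hf : f ∈ F), δ ≤ δf f hf := by
    intro f hf
    have hne : F.Nonempty := ⟨f, hf⟩
    rw [hδdef, dif_pos hne]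
    exact Finset.inf'_le _ (mem_attach _ ⟨f, hf⟩)
  -- finite cover by balls
  obtain ⟨T, hT⟩ := IsCompact.elim_finite_subcover isCompact_univ
    (fun y : Y => Metric.ball y (δ/2)) (fun y => Metric.isOpen_ball)
    (fun y _ => Set.mem_iUnion.2 ⟨y, Metric.mem_ball_self (by linarith)⟩)
  have hcov : ∀ y : Y, ∃ i ∈ T, dist y i < δ/2 := by
    intro y
    have h2 := hT (Set.mem_univ y)
    simp only [Set.mem_iUnion, Metric.mem_ball] at h2
    obtain ⟨i, hi, hd⟩ := h2
    exact ⟨i, hi, hd⟩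
  -- bump functions
  set ψ : Y → Y → ℝ := fun i y => max 0 (δ/2 - dist y i) with hψdef
  have hψcont : ∀ i, Continuous (ψ i) := fun i =>
    continuous_const.max (continuous_const.sub (continuous_id.dist continuous_const))
  have hψ0 : ∀ i y, 0 ≤ ψ i y := fun i y => le_max_left _ _
  set Sden : Y → ℝ := fun y => ∑ i ∈ T, ψ i y with hSdef
  have hScont : Continuous Sden := continuous_finset_sum _ (fun i _ => hψcont i)
  have hSpos : ∀ y, 0 < Sden y := by
    intro y
    obtain ⟨i, hiT, hdi⟩ := hcov y
    have h2 : 0 < ψ i y := by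
      rw [hψdef]
      simp only [lt_max_iff]
      right; linarith
    exact lt_of_lt_of_le h2 (single_le_sum (fun j _ => hψ0 j y) hiT)
  have hψsupp : ∀ (i : Y) (y : Y), ψ i y ≠ 0 → dist y i < δ := by
    intro i y h
    by_contra hc
    push_neg at hc
    apply h
    rw [hψdef]
    simp only [max_eq_left_iff]
    linarith
  -- empirical approximation at each center
  choose n lam x hlam0 hlam1 hlamapp using
    fun i : ↥T => empirical_approx Q hpos hunit F (ε/6) (by linarith) (i : Y)
  have hnpos : ∀ i : ↥T, 0 < n i := by
    intro i
    by_contra h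
    have h0 : n i = 0 := by omega
    have hie : IsEmpty (Fin (n i)) := by rw [h0]; infer_instance
    have h2 := hlam1 i
    rw [@Finset.univ_eq_empty _ _ hie, Finset.sum_empty] at h2
    norm_num at h2
  have hTne : T.Nonempty := by
    obtain ⟨i, hi, _⟩ := hcov (Classical.arbitrary Y)
    exact ⟨i, hi⟩
  have hι : Nonempty ((i : ↥T) × Fin (n i)) :=
    ⟨⟨⟨hTne.choose, hTne.choose_spec⟩, ⟨0, hnpos _⟩⟩⟩
  set m := Fintype.card ((i : ↥T) × Fin (n i)) with hm'
  have hm : 0 < m := Fintype.card_pos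
  set e : ((i : ↥T) × Fin (n i)) ≃ Fin m := Fintype.equivFin _ with he
  set wgt : ((i : ↥T) × Fin (n i)) → Y → ℝ :=
    fun a y => (ψ a.1 y / Sden y) * lam a.1 a.2 with hwgt
  set pnt : ((i : ↥T) × Fin (n i)) → X := fun a => x a.1 a.2 with hpnt
  set u : ℕ → Y → ℝ := fun q y => if h : q < m then wgt (e.symm ⟨q, h⟩) y else 0 with hu
  set z : ℕ → X := fun q => if h : q < m then pnt (e.symm ⟨q, h⟩)
    else Classical.arbitrary X with hz
  have hu_cont : ∀ q, Continuous (u q) := by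
    intro q
    by_cases h : q < m
    · have h3 : u q = fun y => wgt (e.symm ⟨q, h⟩) y := by
        funext y; rw [hu]; exact dif_pos h
      rw [h3]
      simp only [hwgt]
      exact (((hψcont _).div hScont (fun y => (hSpos y).ne')).mul continuous_const)
    · have h3 : u q = fun _ => 0 := by
        funext y; rw [hu]; exact dif_neg h
      rw [h3]; exact continuous_const
  have hu_nonneg : ∀ q y, 0 ≤ u q y := by
    intro q y
    simp only [hu]
    by_cases h : q < m
    · rw [dif_pos h]
      simp only [hwgt]
      exact mul_nonneg (div_nonneg (hψ0 _ _) (hSpos y).le) (hlam0 _ _)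
    · rw [dif_neg h]
  have hwsum : ∀ y, ∑ i : ↥T, ψ (i:Y) y / Sden y = 1 := by
    intro y
    rw [← Finset.sum_div]
    rw [Finset.sum_coe_sort T (fun i => ψ i y)]
    exact div_self (hSpos y).ne'
  have hukey : ∀ (y : Y) (k : Fin m), u (k:ℕ) y = wgt (e.symm k) y :=
    fun y k => dif_pos k.isLt
  have hsum_u : ∀ y, ∑ q ∈ range m, u q y = 1 := by
    intro y
    rw [← Fin.sum_univ_eq_sum_range (fun q => u q y) m]
    rw [Finset.sum_congr rfl (fun k _ => hukey y k)]
    rw [Equiv.sum_comp e.symm (fun a => wgt a y)]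
    rw [← Finset.univ_sigma_univ, Finset.sum_sigma]
    have h2 : ∀ i : ↥T, ∑ k : Fin (n i), wgt ⟨i, k⟩ y = ψ (i:Y) y / Sden y := by
      intro i
      simp only [hwgt]
      rw [← mul_sum, hlam1 i, mul_one]
    rw [Finset.sum_congr rfl (fun i _ => h2 i)]
    exact hwsum y
  -- approximation of Q f by the discrete weights
  have happrox : ∀ f ∈ F, ∀ y : Y,
      |(Q f) y - ∑ q ∈ range m, u q y * f (z q)| ≤ ε/3 := by
    intro f hf y
    set c : ↥T → ℝ := fun i => ψ (i:Y) y / Sden y with hc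
    have hc0 : ∀ i, 0 ≤ c i := fun i => div_nonneg (hψ0 _ _) (hSpos y).le
    have hsum : ∑ q ∈ range m, u q y * f (z q)
        = ∑ i : ↥T, c i * (∑ k : Fin (n i), lam i k * f (x i k)) := by
      rw [← Fin.sum_univ_eq_sum_range (fun q => u q y * f (z q)) m]
      have h3 : ∀ k : Fin m, u (k:ℕ) y * f (z (k:ℕ))
          = wgt (e.symm k) y * f (pnt (e.symm k)) := by
        intro k
        congr 1
        · exact hukey y k
        · congr 1
          exact dif_pos k.isLt
      rw [Finset.sum_congr rfl (fun k _ => h3 k)]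
      rw [Equiv.sum_comp e.symm (fun a => wgt a y * f (pnt a))]
      rw [← Finset.univ_sigma_univ, Finset.sum_sigma]
      refine Finset.sum_congr rfl (fun i _ => ?_)
      simp only [hwgt, hpnt, hc]
      rw [mul_sum]
      refine Finset.sum_congr rfl (fun k _ => ?_)
      ring
    rw [hsum]
    have hQy : (Q f) y = ∑ i : ↥T, c i * (Q f) y := by
      rw [← Finset.sum_mul, hwsum y, one_mul]
    have hstep1 : |(Q f) y - ∑ i : ↥T, c i * (Q f) (i:Y)| ≤ ε/6 := by
      rw [hQy, ← Finset.sum_sub_distrib]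
      calc |∑ i : ↥T, (c i * (Q f) y - c i * (Q f) (i:Y))|
          ≤ ∑ i : ↥T, |c i * (Q f) y - c i * (Q f) (i:Y)| := abs_sum_le_sum_abs _ _
        _ ≤ ∑ i : ↥T, c i * (ε/6) := by
            refine sum_le_sum (fun i _ => ?_)
            rw [← mul_sub, abs_mul, abs_of_nonneg (hc0 i)]
            by_cases hzero : ψ (i:Y) y = 0
            · have : c i = 0 := by rw [hc]; simp [hzero]
              rw [this]
              simp
            · have hd : dist y (i:Y) < δ := hψsupp _ _ hzero
              have hlt : dist ((Q f) y) ((Q f) (i:Y)) < ε/6 :=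
                hδf f hf (lt_of_lt_of_le hd (hδle f hf))
              rw [Real.dist_eq] at hlt
              exact mul_le_mul_of_nonneg_left hlt.le (hc0 i)
        _ = ε/6 := by
            rw [← Finset.sum_mul]
            have : ∑ i : ↥T, c i = 1 := by
              simp only [hc]
              exact hwsum y
            rw [this, one_mul]
    have hstep2 : |(∑ i : ↥T, c i * (Q f) (i:Y))
        - ∑ i : ↥T, c i * (∑ k : Fin (n i), lam i k * f (x i k))| ≤ ε/6 := by
      rw [← Finset.sum_sub_distrib]
      calc |∑ i : ↥T, (c i * (Q f) (i:Y) - c i * ∑ k : Fin (n i), lam i k * f (x i k))|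
          ≤ ∑ i : ↥T, |c i * (Q f) (i:Y) - c i * ∑ k : Fin (n i), lam i k * f (x i k)| :=
            abs_sum_le_sum_abs _ _
        _ ≤ ∑ i : ↥T, c i * (ε/6) := by
            refine sum_le_sum (fun i _ => ?_)
            rw [← mul_sub, abs_mul, abs_of_nonneg (hc0 i)]
            exact mul_le_mul_of_nonneg_left (hlamapp i f hf) (hc0 i)
        _ = ε/6 := by
            rw [← Finset.sum_mul]
            have : ∑ i : ↥T, c i = 1 := by
              simp only [hc]
              exact hwsum y
            rw [this, one_mul]
    calc |(Q f) y - ∑ i : ↥T, c i * (∑ k : Fin (n i), lam i k * f (x i k))|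
        ≤ |(Q f) y - ∑ i : ↥T, c i * (Q f) (i:Y)|
          + |(∑ i : ↥T, c i * (Q f) (i:Y))
            - ∑ i : ↥T, c i * (∑ k : Fin (n i), lam i k * f (x i k))| := abs_sub_le _ _ _
      _ ≤ ε/6 + ε/6 := add_le_add hstep1 hstep2
      _ = ε/3 := by ring
  -- apply the main construction
  obtain ⟨N₀, hN₀pos, hmain⟩ := main_construction F m hm z u hu_cont hu_nonneg hsum_u
    (ε/2) (by linarith)
  refine ⟨N₀, fun N hN => ?_⟩
  obtain ⟨g, hg⟩ := hmain N hN
  refine ⟨g, fun f hf => ?_⟩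
  rw [ContinuousMap.norm_lt_iff _ hε]
  intro y
  have h2 := hg f hf y
  have h3 := happrox f hf y
  simp only [ContinuousMap.sub_apply, ContinuousMap.smul_apply, ContinuousMap.sum_apply,
    ContinuousMap.comp_apply, smul_eq_mul, Real.norm_eq_abs]
  have h4 := abs_sub_le ((Q f) y) (∑ q ∈ range m, u q y * f (z q))
    ((N:ℝ)⁻¹ * ∑ j : Fin N, f ((g j) y))
  linarith
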